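/- For a bounded random variable Z on a probability space (Ω, F, P) and α ∈ (0,1], CVaR_α(Z) = max over ξ in the dual risk envelope U(α,P) of E[ξZ], where U(α,P) = {ξ : 0 ≤ αξ ≤ 1 a.s. and E[ξ] = 1}. -/

import Mathlib

open MeasureTheory Set

section CVaRAux

variable {Ω : Type*} [MeasurableSpace Ω] {μ : Measure Ω} [IsProbabilityMeasure μ]

/-- A measurable a.e.-bounded function is integrable w.r.t. a probability measure. -/
lemma cvar_integrable_of_bdd {f : Ω → ℝ} (hf : Measurable f) {M : ℝ}
    (h : ∀ᵐ ω ∂μ, |f ω| ≤ M) : Integrable f μ :=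
  ⟨hf.aestronglyMeasurable, HasFiniteIntegral.of_bounded h⟩

lemma cvar_integrable_max {Z : Ω → ℝ} (hZmeas : Measurable Z) {C : ℝ} (hC0 : 0 ≤ C)
    (hZbdd : ∀ ω, |Z ω| ≤ C) (w : ℝ) :
    Integrable (fun ω => max (Z ω - w) 0) μ := by
  apply cvar_integrable_of_bdd ((hZmeas.sub measurable_const).max measurable_const)
    (M := C + |w|)
  filter_upwards with ω
  have h1 := abs_le.mp (hZbdd ω)
  have h2 := le_abs_self w
  have h3 := neg_abs_le w
  rw [abs_of_nonneg (le_max_right _ _), max_le_iff]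
  constructor
  · show Z ω - w ≤ C + |w|
    linarith
  · positivity

/-- Weak duality: for any feasible dual variable `ξ` and any `w`,
`E[ξ Z] ≤ w + α⁻¹ E[(Z - w)⁺]`. -/
lemma cvar_weak_duality (Z : Ω → ℝ) (hZmeas : Measurable Z) (C : ℝ) (hC0 : 0 ≤ C)
    (hZbdd : ∀ ω, |Z ω| ≤ C) {α : ℝ} (hα0 : 0 < α)
    (ξ : Ω → ℝ) (hξm : Measurable ξ)
    (hξb : ∀ᵐ ω ∂μ, 0 ≤ α * ξ ω ∧ α * ξ ω ≤ 1)
    (hξ1 : (∫ ω, ξ ω ∂μ) = 1) (w : ℝ) :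
    ∫ ω, ξ ω * Z ω ∂μ ≤ w + α⁻¹ * ∫ ω, max (Z ω - w) 0 ∂μ := by
  have hξb' : ∀ᵐ ω ∂μ, 0 ≤ ξ ω ∧ ξ ω ≤ α⁻¹ := by
    filter_upwards [hξb] with ω ⟨h1, h2⟩
    constructor
    · nlinarith
    · have := (le_div_iff₀ hα0).mpr (show ξ ω * α ≤ 1 by nlinarith)
      rwa [one_div] at this
  have hint1 : Integrable (fun ω => ξ ω * Z ω) μ := by
    apply cvar_integrable_of_bdd (hξm.mul hZmeas) (M := α⁻¹ * C)
    filter_upwards [hξb'] with ω ⟨h1, h2⟩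
    rw [Pi.mul_apply, abs_mul, abs_of_nonneg h1]
    exact mul_le_mul h2 (hZbdd ω) (abs_nonneg _) (by positivity)
  have hintmax : Integrable (fun ω => max (Z ω - w) 0) μ :=
    cvar_integrable_max hZmeas hC0 hZbdd w
  have hintξw : Integrable (fun ω => ξ ω * w) μ := by
    apply cvar_integrable_of_bdd (hξm.mul measurable_const) (M := α⁻¹ * |w|)
    filter_upwards [hξb'] with ω ⟨h1, h2⟩
    rw [Pi.mul_apply, abs_mul, abs_of_nonneg h1]
    exact mul_le_mul_of_nonneg_right h2 (abs_nonneg _)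
  have hint2 : Integrable (fun ω => ξ ω * w + α⁻¹ * max (Z ω - w) 0) μ :=
    hintξw.add (hintmax.const_mul _)
  have hle : ∫ ω, ξ ω * Z ω ∂μ ≤ ∫ ω, (ξ ω * w + α⁻¹ * max (Z ω - w) 0) ∂μ := by
    apply integral_mono_ae hint1 hint2
    filter_upwards [hξb'] with ω ⟨h1, h2⟩
    have key : ξ ω * (Z ω - w) ≤ α⁻¹ * max (Z ω - w) 0 := by
      rcases le_or_gt 0 (Z ω - w) with h | h
      · rw [max_eq_left h]
        exact mul_le_mul_of_nonneg_right h2 h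
      · rw [max_eq_right h.le]
        nlinarith
    nlinarith
  calc ∫ ω, ξ ω * Z ω ∂μ ≤ ∫ ω, (ξ ω * w + α⁻¹ * max (Z ω - w) 0) ∂μ := hle
    _ = (∫ ω, ξ ω ∂μ) * w + α⁻¹ * ∫ ω, max (Z ω - w) 0 ∂μ := by
        rw [integral_add hintξw (hintmax.const_mul _), integral_mul_const,
          integral_const_mul]
    _ = w + α⁻¹ * ∫ ω, max (Z ω - w) 0 ∂μ := by rw [hξ1, one_mul]

end CVaRAux

/-- Dual representation of CVaR: for a bounded random variable `Z` and `α ∈ (0,1]`,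
`CVaR_α(Z) = max { E[ξ Z] : 0 ≤ α ξ ≤ 1 a.s., E[ξ] = 1 }`, where
`CVaR_α(Z) = min_w { w + α⁻¹ E[(Z - w)⁺] }`. The maximum is attained. -/
theorem cvar_dual_representation {Ω : Type*} [MeasurableSpace Ω] (μ : Measure Ω)
    [IsProbabilityMeasure μ] (Z : Ω → ℝ) (hZmeas : Measurable Z)
    (C : ℝ) (hZbdd : ∀ ω, |Z ω| ≤ C)
    (α : ℝ) (hα : α ∈ Set.Ioc (0 : ℝ) 1) :
    IsGreatest
      {r : ℝ | ∃ ξ : Ω → ℝ, Measurable ξ ∧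
        (∀ᵐ ω ∂μ, 0 ≤ α * ξ ω ∧ α * ξ ω ≤ 1) ∧
        (∫ ω, ξ ω ∂μ) = 1 ∧ r = ∫ ω, ξ ω * Z ω ∂μ}
      (sInf {v : ℝ | ∃ w : ℝ, v = w + α⁻¹ * ∫ ω, max (Z ω - w) 0 ∂μ}) := by
  obtain ⟨hα0, hα1⟩ := hα
  have hΩ : Nonempty Ω := by
    by_contra h
    rw [not_nonempty_iff] at h
    have h0 : μ univ = 0 := by
      have : (univ : Set Ω) = ∅ := eq_empty_iff_forall_notMem.mpr (fun ω _ => h.false ω)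
      simp [this]
    simp [measure_univ] at h0
  obtain ⟨ω₀⟩ := hΩ
  have hC0 : 0 ≤ C := le_trans (abs_nonneg _) (hZbdd ω₀)
  -- the quantile
  set S : Set ℝ := {t : ℝ | -C ≤ t ∧ μ {ω | t < Z ω} ≤ ENNReal.ofReal α} with hS
  have hCS : C ∈ S := by
    refine ⟨by linarith, ?_⟩
    have hE : {ω | C < Z ω} = ∅ := by
      ext ω
      simp only [mem_setOf_eq, mem_empty_iff_false, iff_false, not_lt]
      exact (abs_le.mp (hZbdd ω)).2
    simp [hE]
  have hSne : S.Nonempty := ⟨C, hCS⟩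
  have hSbdd : BddBelow S := ⟨-C, fun t ht => ht.1⟩
  set w₀ : ℝ := sInf S with hw₀
  -- (a) : μ {Z > w₀} ≤ α
  have ha : μ {ω | w₀ < Z ω} ≤ ENNReal.ofReal α := by
    have hUn : {ω | w₀ < Z ω} = ⋃ n : ℕ, {ω | w₀ + 1 / (n + 1) < Z ω} := by
      ext ω
      simp only [mem_setOf_eq, mem_iUnion]
      constructor
      · intro h
        obtain ⟨n, hn⟩ := exists_nat_one_div_lt (sub_pos.mpr h)
        exact ⟨n, by linarith⟩
      · rintro ⟨n, hn⟩
        have : (0:ℝ) < 1 / (n + 1) := by positivity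
        linarith
    have hmono : Monotone (fun n : ℕ => {ω | w₀ + 1 / ((n : ℝ) + 1) < Z ω}) := by
      intro n m hnm ω hω
      simp only [mem_setOf_eq] at *
      have hcast : (n : ℝ) ≤ m := Nat.cast_le.mpr hnm
      have : (1:ℝ) / (m + 1) ≤ 1 / (n + 1) :=
        one_div_le_one_div_of_le (by positivity) (by linarith)
      linarith
    rw [hUn, hmono.measure_iUnion]
    apply iSup_le
    intro n
    have hpos : (0:ℝ) < 1 / (n + 1) := by positivity
    obtain ⟨t, htS, htlt⟩ := exists_lt_of_csInf_lt hSne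
      (show sInf S < w₀ + 1 / (n + 1) by rw [← hw₀]; linarith)
    calc μ {ω | w₀ + 1 / ((n : ℝ) + 1) < Z ω} ≤ μ {ω | t < Z ω} := by
          apply measure_mono
          intro ω hω
          simp only [mem_setOf_eq] at *
          linarith
      _ ≤ ENNReal.ofReal α := htS.2
  -- (b) : μ {Z ≥ w₀} ≥ α
  have hb : ENNReal.ofReal α ≤ μ {ω | w₀ ≤ Z ω} := by
    have hIn : {ω | w₀ ≤ Z ω} = ⋂ n : ℕ, {ω | w₀ - 1 / (n + 1) < Z ω} := by
      ext ω
      simp only [mem_setOf_eq, mem_iInter]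
      constructor
      · intro h n
        have : (0:ℝ) < 1 / (n + 1) := by positivity
        linarith
      · intro h
        by_contra hcon
        push_neg at hcon
        obtain ⟨n, hn⟩ := exists_nat_one_div_lt (sub_pos.mpr hcon)
        have := h n
        linarith
    have hanti : Antitone (fun n : ℕ => {ω | w₀ - 1 / ((n : ℝ) + 1) < Z ω}) := by
      intro n m hnm ω hω
      simp only [mem_setOf_eq] at *
      have hcast : (n : ℝ) ≤ m := Nat.cast_le.mpr hnm
      have : (1:ℝ) / (m + 1) ≤ 1 / (n + 1) :=
        one_div_le_one_div_of_le (by positivity) (by linarith)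
      linarith
    rw [hIn, hanti.measure_iInter (fun n => (hZmeas measurableSet_Ioi).nullMeasurableSet)
      ⟨0, measure_ne_top _ _⟩]
    apply le_iInf
    intro n
    have hpos : (0:ℝ) < 1 / (n + 1) := by positivity
    rcases lt_or_ge (w₀ - 1 / ((n : ℝ) + 1)) (-C) with hcase | hcase
    · have hU : {ω | w₀ - 1 / ((n : ℝ) + 1) < Z ω} = univ := by
        ext ω
        simp only [mem_setOf_eq, mem_univ, iff_true]
        have := (abs_le.mp (hZbdd ω)).1
        linarith
      rw [hU, measure_univ]
      exact ENNReal.ofReal_le_one.mpr hα1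
    · by_contra hcon
      push_neg at hcon
      have hmem : w₀ - 1 / ((n : ℝ) + 1) ∈ S := ⟨hcase, hcon.le⟩
      have := csInf_le hSbdd hmem
      rw [← hw₀] at this
      linarith
  -- the sets A and B
  set A : Set Ω := {ω | w₀ < Z ω} with hA
  set B : Set Ω := {ω | Z ω = w₀} with hB
  have hAmeas : MeasurableSet A := hZmeas measurableSet_Ioi
  have hBmeas : MeasurableSet B := hZmeas (measurableSet_singleton w₀)
  have hABdisj : Disjoint A B := by
    rw [Set.disjoint_left]
    intro ω hωA hωB
    simp only [hA, hB, mem_setOf_eq] at hωA hωB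
    linarith [hωB.ge]
  have hABunion : A ∪ B = {ω | w₀ ≤ Z ω} := by
    ext ω
    simp only [hA, hB, mem_union, mem_setOf_eq]
    constructor
    · rintro (h | h)
      · exact h.le
      · exact h.ge
    · intro h
      rcases eq_or_lt_of_le h with h' | h'
      · exact Or.inr h'.symm
      · exact Or.inl h'
  set p : ℝ := (μ A).toReal with hp
  set q : ℝ := (μ B).toReal with hq
  have hq0 : 0 ≤ q := ENNReal.toReal_nonneg
  have hpα : p ≤ α := by
    rw [hp]
    calc (μ A).toReal ≤ (ENNReal.ofReal α).toReal :=
          ENNReal.toReal_mono ENNReal.ofReal_ne_top ha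
      _ = α := ENNReal.toReal_ofReal hα0.le
  have hαpq : α ≤ p + q := by
    have hu := measure_union (μ := μ) hABdisj hBmeas
    rw [hABunion] at hu
    calc α = (ENNReal.ofReal α).toReal := (ENNReal.toReal_ofReal hα0.le).symm
      _ ≤ (μ {ω | w₀ ≤ Z ω}).toReal := ENNReal.toReal_mono (measure_ne_top _ _) hb
      _ = p + q := by rw [hu, ENNReal.toReal_add (measure_ne_top _ _) (measure_ne_top _ _)]
  -- the optimal dual variable
  set c : ℝ := if q = 0 then 0 else (α - p) / (α * q) with hc
  have hc0 : 0 ≤ c := by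
    rw [hc]
    split_ifs with h
    · exact le_rfl
    · have hqpos : 0 < q := lt_of_le_of_ne hq0 (Ne.symm h)
      apply div_nonneg (by linarith) (by positivity)
  have hcα : c ≤ α⁻¹ := by
    rw [hc]
    split_ifs with h
    · positivity
    · have hqpos : 0 < q := lt_of_le_of_ne hq0 (Ne.symm h)
      rw [div_le_iff₀ (by positivity)]
      have : α⁻¹ * (α * q) = q := by field_simp
      rw [this]
      linarith
  have hpq0 : q = 0 → p = α := fun h => le_antisymm hpα (by linarith)
  set ξ : Ω → ℝ := fun ω => if w₀ < Z ω then α⁻¹ else if Z ω = w₀ then c else 0 with hξ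
  have hξmeas : Measurable ξ :=
    Measurable.ite hAmeas measurable_const
      (Measurable.ite hBmeas measurable_const measurable_const)
  have hξbdd : ∀ ω, 0 ≤ ξ ω ∧ ξ ω ≤ α⁻¹ := by
    intro ω
    rw [hξ]
    dsimp only
    split_ifs with h1 h2
    · exact ⟨by positivity, le_refl _⟩
    · exact ⟨hc0, hcα⟩
    · exact ⟨le_refl _, by positivity⟩
  have hξae : ∀ᵐ ω ∂μ, 0 ≤ α * ξ ω ∧ α * ξ ω ≤ 1 := by
    filter_upwards with ω
    obtain ⟨h1, h2⟩ := hξbdd ω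
    constructor
    · positivity
    · calc α * ξ ω ≤ α * α⁻¹ := by nlinarith
        _ = 1 := mul_inv_cancel₀ hα0.ne'
  -- ξ as a sum of indicators
  have hξeq : ξ = fun ω => A.indicator (fun _ => α⁻¹) ω + B.indicator (fun _ => c) ω := by
    funext ω
    rw [hξ]
    dsimp only
    by_cases h1 : w₀ < Z ω
    · have h2 : ω ∈ A := h1
      have h3 : ω ∉ B := fun hB' => absurd (show Z ω = w₀ from hB') (by intro h; linarith [h.ge])
      rw [if_pos h1, Set.indicator_of_mem h2, Set.indicator_of_notMem h3, add_zero]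
    · have h2 : ω ∉ A := h1
      rw [if_neg h1, Set.indicator_of_notMem h2, zero_add]
      by_cases h3 : Z ω = w₀
      · rw [if_pos h3, Set.indicator_of_mem (show ω ∈ B from h3)]
      · rw [if_neg h3, Set.indicator_of_notMem (show ω ∉ B from h3)]
  have hintA : Integrable (A.indicator (fun _ => α⁻¹)) μ :=
    (integrable_const _).indicator hAmeas
  have hintB : Integrable (B.indicator (fun _ => (c:ℝ))) μ :=
    (integrable_const _).indicator hBmeas
  have hξint1 : (∫ ω, ξ ω ∂μ) = 1 := by
    rw [hξeq, integral_add hintA hintB, integral_indicator_const _ hAmeas,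
      integral_indicator_const _ hBmeas]
    simp only [smul_eq_mul, Measure.real_def, ← hp, ← hq]
    by_cases h : q = 0
    · rw [hc, if_pos h, h, hpq0 h]
      field_simp
      norm_num
    · have hqpos : 0 < q := lt_of_le_of_ne hq0 (Ne.symm h)
      rw [hc, if_neg h]
      field_simp
      ring
  -- the integral of ξ Z
  have hZint : Integrable Z μ := cvar_integrable_of_bdd hZmeas (ae_of_all _ hZbdd)
  have hξZeq : (fun ω => ξ ω * Z ω) =
      fun ω => A.indicator (fun ω => α⁻¹ * Z ω) ω + B.indicator (fun ω => c * Z ω) ω := by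
    funext ω
    rw [hξ]
    dsimp only
    by_cases h1 : w₀ < Z ω
    · have h3 : ω ∉ B := fun hB' => absurd (show Z ω = w₀ from hB') (by intro h; linarith [h.ge])
      rw [if_pos h1, Set.indicator_of_mem (show ω ∈ A from h1),
        Set.indicator_of_notMem h3, add_zero]
    · rw [if_neg h1, Set.indicator_of_notMem (show ω ∉ A from h1), zero_add]
      by_cases h3 : Z ω = w₀
      · rw [if_pos h3, Set.indicator_of_mem (show ω ∈ B from h3)]
      · rw [if_neg h3, Set.indicator_of_notMem (show ω ∉ B from h3), zero_mul]
  have hintAZ : IntegrableOn (fun ω => α⁻¹ * Z ω) A μ :=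
    (hZint.const_mul _).integrableOn
  have hintBZ : IntegrableOn (fun ω => c * Z ω) B μ :=
    (hZint.const_mul _).integrableOn
  have hξZint : (∫ ω, ξ ω * Z ω ∂μ) =
      α⁻¹ * (∫ ω in A, Z ω ∂μ) + q * (c * w₀) := by
    rw [hξZeq, integral_add (hintAZ.integrable_indicator hAmeas)
      (hintBZ.integrable_indicator hBmeas), integral_indicator hAmeas,
      integral_indicator hBmeas, integral_const_mul]
    congr 1
    rw [setIntegral_congr_fun hBmeas (show EqOn (fun ω => c * Z ω) (fun _ => c * w₀) B by
      intro ω hω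
      have : Z ω = w₀ := hω
      simp [this])]
    rw [setIntegral_const, smul_eq_mul, Measure.real_def, ← hq]
  -- the integral of max (Z - w₀) 0
  have hmaxeq : (fun ω => max (Z ω - w₀) 0) = A.indicator (fun ω => Z ω - w₀) := by
    funext ω
    by_cases h1 : w₀ < Z ω
    · rw [Set.indicator_of_mem (show ω ∈ A from h1), max_eq_left (by linarith)]
    · rw [Set.indicator_of_notMem (show ω ∉ A from h1), max_eq_right (by
        push_neg at h1
        linarith)]
  have hmaxint : (∫ ω, max (Z ω - w₀) 0 ∂μ) = (∫ ω in A, Z ω ∂μ) - p * w₀ := by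
    rw [hmaxeq, integral_indicator hAmeas,
      integral_sub hZint.integrableOn (integrableOn_const (measure_ne_top _ _)),
      setIntegral_const, smul_eq_mul, Measure.real_def, ← hp]
  -- the key equality
  have hmain : (∫ ω, ξ ω * Z ω ∂μ) = w₀ + α⁻¹ * ∫ ω, max (Z ω - w₀) 0 ∂μ := by
    rw [hξZint, hmaxint]
    by_cases h : q = 0
    · rw [hc, if_pos h, h, hpq0 h]
      field_simp
      ring
    · have hqpos : 0 < q := lt_of_le_of_ne hq0 (Ne.symm h)
      rw [hc, if_neg h]
      field_simp
      ring
  -- conclusion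
  set V : Set ℝ := {v : ℝ | ∃ w : ℝ, v = w + α⁻¹ * ∫ ω, max (Z ω - w) 0 ∂μ} with hV
  have hVne : V.Nonempty := ⟨0 + α⁻¹ * ∫ ω, max (Z ω - 0) 0 ∂μ, 0, rfl⟩
  have hlb : ∀ v ∈ V, (∫ ω, ξ ω * Z ω ∂μ) ≤ v := by
    rintro v ⟨w, rfl⟩
    exact cvar_weak_duality Z hZmeas C hC0 hZbdd hα0 ξ hξmeas hξae hξint1 w
  have hVbdd : BddBelow V := ⟨∫ ω, ξ ω * Z ω ∂μ, fun v hv => hlb v hv⟩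
  have hsInf : sInf V = ∫ ω, ξ ω * Z ω ∂μ :=
    le_antisymm (csInf_le hVbdd ⟨w₀, hmain⟩) (le_csInf hVne hlb)
  constructor
  · exact ⟨ξ, hξmeas, hξae, hξint1, hsInf⟩
  · rintro r ⟨ξ', hξ'meas, hξ'ae, hξ'int1, rfl⟩
    apply le_csInf hVne
    rintro v ⟨w, rfl⟩
    exact cvar_weak_duality Z hZmeas C hC0 hZbdd hα0 ξ' hξ'meas hξ'ae hξ'int1 w
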